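/- Let R be a commutative ring, I an ideal of R, and P a prime ideal of R with I ⊆ P. Set P₀ = {(p, p+i) : p ∈ P, i ∈ I ∩ P}, P₁ = {(p, p+i) : p ∈ P, i ∈ I}, and P₂ = {(p+i, p) : p ∈ P, i ∈ I}. Then P₀ = P₁ = P₂, and the localization (R⋈I)_{P₀} is isomorphic as a ring to the amalgamated duplication R_P ⋈ I_P, where R_P is the localization of R at P and I_P is the ideal of R_P generated by the image of I. -/

import Mathlib

universe u

open scoped TensorProduct

namespace Paper

/-- The amalgamated duplication `R ⋈ I`, as the subring
`{(r, s) : s - r ∈ I} = {(r, r+i) : r ∈ R, i ∈ I}` of `R × R`. -/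
def dup (R : Type*) [CommRing R] (I : Ideal R) : Subring (R × R) where
  carrier := {p | p.2 - p.1 ∈ I}
  zero_mem' := by simp
  one_mem' := by simp
  add_mem' := by
    intro a b ha hb
    simp only [Set.mem_setOf_eq, Prod.fst_add, Prod.snd_add] at *
    have h : a.2 + b.2 - (a.1 + b.1) = (a.2 - a.1) + (b.2 - b.1) := by ring
    rw [h]; exact I.add_mem ha hb
  neg_mem' := by
    intro a ha
    simp only [Set.mem_setOf_eq, Prod.fst_neg, Prod.snd_neg] at *
    have h : -a.2 - -a.1 = -(a.2 - a.1) := by ring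
    rw [h]; exact I.neg_mem ha
  mul_mem' := by
    intro a b ha hb
    simp only [Set.mem_setOf_eq, Prod.fst_mul, Prod.snd_mul] at *
    have h : a.2 * b.2 - a.1 * b.1 = a.2 * (b.2 - b.1) + (a.2 - a.1) * b.1 := by ring
    rw [h]; exact I.add_mem (I.mul_mem_left _ hb) (I.mul_mem_right _ ha)

lemma mem_dup {R : Type*} [CommRing R] {I : Ideal R} {p : R × R} :
    p ∈ dup R I ↔ p.2 - p.1 ∈ I := Iff.rfl

/-- The diagonal embedding `R → R ⋈ I`, `r ↦ (r, r)`. -/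
def diag (R : Type*) [CommRing R] (I : Ideal R) : R →+* dup R I where
  toFun r := ⟨(r, r), mem_dup.mpr (by simp)⟩
  map_one' := rfl
  map_mul' _ _ := rfl
  map_zero' := rfl
  map_add' _ _ := rfl

noncomputable instance dupAlgebra (R : Type*) [CommRing R] (I : Ideal R) :
    Algebra R (dup R I) := (diag R I).toAlgebra

/-- `pdLE R n M` means that `M` has projective dimension `≤ n` as an `R`-module. -/
def pdLE (R : Type u) [CommRing R] : ℕ → (M : Type u) → [AddCommGroup M] → [Module R M] → Prop
  | 0, M, _, _ => Module.Projective R M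
  | (n + 1), M, _, _ => pdLE R n (LinearMap.ker (Finsupp.linearCombination R (id : M → M)))

/-- `fdLE R n M` means that `M` has flat dimension `≤ n` as an `R`-module. -/
def fdLE (R : Type u) [CommRing R] : ℕ → (M : Type u) → [AddCommGroup M] → [Module R M] → Prop
  | 0, M, _, _ => Module.Flat R M
  | (n + 1), M, _, _ => fdLE R n (LinearMap.ker (Finsupp.linearCombination R (id : M → M)))

/-- The projective dimension of an `R`-module `M`, as an element of `ℕ∞`. -/
noncomputable def projDim (R : Type u) [CommRing R] (M : Type u) [AddCommGroup M]
    [Module R M] : ℕ∞ :=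
  sInf {n : ℕ∞ | ∃ k : ℕ, (k : ℕ∞) = n ∧ pdLE R k M}

/-- The flat dimension of an `R`-module `M`, as an element of `ℕ∞`. -/
noncomputable def flatDim (R : Type u) [CommRing R] (M : Type u) [AddCommGroup M]
    [Module R M] : ℕ∞ :=
  sInf {n : ℕ∞ | ∃ k : ℕ, (k : ℕ∞) = n ∧ fdLE R k M}

/-- The global dimension of `R`: the supremum of projective dimensions of `R`-modules. -/
noncomputable def gldim (R : Type u) [CommRing R] : ℕ∞ :=
  ⨆ (M : Type u) (_ : AddCommGroup M) (_ : Module R M), projDim R M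

/-- The weak global dimension of `R`: the supremum of flat dimensions of `R`-modules. -/
noncomputable def wdim (R : Type u) [CommRing R] : ℕ∞ :=
  ⨆ (M : Type u) (_ : AddCommGroup M) (_ : Module R M), flatDim R M


/-- The first projection `R ⋈ I → R`, `(r, r+i) ↦ r`. -/
def dupFst (R : Type*) [CommRing R] (I : Ideal R) : dup R I →+* R :=
  (RingHom.fst R R).comp (dup R I).subtype

/-- The second projection `R ⋈ I → R`, `(r, r+i) ↦ r + i`. -/
def dupSnd (R : Type*) [CommRing R] (I : Ideal R) : dup R I →+* R :=
  (RingHom.snd R R).comp (dup R I).subtype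

/-- A commutative ring is von Neumann regular if every `a` satisfies `a = a²b` for some `b`. -/
def IsVNRegular (R : Type*) [CommRing R] : Prop := ∀ a : R, ∃ b : R, a = a * a * b

/-- A commutative ring is semihereditary if every finitely generated ideal is projective. -/
def IsSemihereditary (R : Type*) [CommRing R] : Prop :=
  ∀ J : Ideal R, J.FG → Module.Projective R J

/-- A commutative ring is coherent if every finitely generated ideal is finitely presented. -/
def IsCoherentRing (R : Type*) [CommRing R] : Prop :=
  ∀ J : Ideal R, J.FG → Module.FinitePresentation R J

/-- The content of a polynomial: the ideal generated by its coefficients. -/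
def contentIdeal {R : Type*} [CommRing R] (f : Polynomial R) : Ideal R :=
  Ideal.span (Set.range f.coeff)

/-- A commutative ring is Gaussian if `c(fg) = c(f)c(g)` for all polynomials `f, g`. -/
def IsGaussianRing (R : Type*) [CommRing R] : Prop :=
  ∀ f g : Polynomial R, contentIdeal (f * g) = contentIdeal f * contentIdeal g

/-- `R` is a `(1,d)`-ring if every finitely presented (i.e. `1`-presented) `R`-module has
projective dimension at most `d`. -/
def IsOneDRing (R : Type u) [CommRing R] (d : ℕ) : Prop :=
  ∀ (M : Type u) [AddCommGroup M] [Module R M],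
    Module.FinitePresentation R M → projDim R M ≤ (d : ℕ∞)

/-- The trace ideal of an `R`-module `M`: the sum of the images of all `R`-linear maps
`M → R`. -/
def traceIdeal (R : Type*) [CommRing R] (M : Type*) [AddCommGroup M] [Module R M] : Ideal R :=
  ⨆ f : M →ₗ[R] R, LinearMap.range f

section

variable {R : Type u} [CommRing R] (I P : Ideal R) [P.IsPrime]

local notation "R_P" => Localization.AtPrime P
local notation "I_P" => I.map (algebraMap R R_P)

/-- The componentwise localization map `R ⋈ I → R_P ⋈ I_P`. -/
noncomputable def dupMap : dup R I →+* dup R_P I_P :=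
  RingHom.codRestrict
    (((algebraMap R R_P).prodMap (algebraMap R R_P)).comp (dup R I).subtype) _
    (fun x => by
      show (algebraMap R R_P) x.1.2 - (algebraMap R R_P) x.1.1 ∈ I_P
      rw [← map_sub]
      exact Ideal.mem_map_of_mem _ x.2)

lemma dupMap_coe (x : dup R I) :
    ((dupMap I P x : R_P × R_P)) = (algebraMap R R_P x.1.1, algebraMap R R_P x.1.2) := rfl

lemma dupMap_isUnit (hIP : I ≤ P) (y : (P.comap (dupFst R I)).primeCompl) :
    IsUnit (dupMap I P y) := by
  have hy1 : (y : dup R I).1.1 ∉ P := y.2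
  set a : R_P := algebraMap R R_P (y : dup R I).1.1 with ha_def
  set b : R_P := algebraMap R R_P (y : dup R I).1.2 with hb_def
  have hba : b - a ∈ I_P := by
    rw [ha_def, hb_def, ← map_sub]; exact Ideal.mem_map_of_mem _ (y : dup R I).2
  have hm : b - a ∈ IsLocalRing.maximalIdeal R_P := by
    rw [← Localization.AtPrime.map_eq_maximalIdeal]
    exact Ideal.map_mono hIP hba
  have hua : IsUnit a := IsLocalization.map_units R_P (⟨_, hy1⟩ : P.primeCompl)
  have hub : IsUnit b := by
    by_contra hb
    have : b ∈ IsLocalRing.maximalIdeal R_P := hb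
    have : a ∈ IsLocalRing.maximalIdeal R_P := by
      have := Ideal.sub_mem _ this hm
      simpa using this
    exact this hua
  obtain ⟨ua, hua'⟩ := hua
  obtain ⟨ub, hub'⟩ := hub
  have hmem : ((↑ua⁻¹, ↑ub⁻¹) : R_P × R_P) ∈ dup R_P I_P := by
    rw [mem_dup]
    have key : (↑ub⁻¹ - ↑ua⁻¹ : R_P) = -(↑ua⁻¹ * ↑ub⁻¹) * (b - a) := by
      have h1 : (↑ua⁻¹ : R_P) * a = 1 := by rw [hua'.symm] at *; exact ua.inv_mul
      have h2 : (↑ub⁻¹ : R_P) * b = 1 := by rw [hub'.symm] at *; exact ub.inv_mul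
      have : (↑ub⁻¹ - ↑ua⁻¹ : R_P) = ↑ub⁻¹ * (↑ua⁻¹ * a) - ↑ua⁻¹ * (↑ub⁻¹ * b) := by
        rw [h1, h2]; ring
      rw [this]; ring
    rw [key]
    exact Ideal.mul_mem_left _ _ hba
  rw [isUnit_iff_exists]
  refine ⟨⟨(↑ua⁻¹, ↑ub⁻¹), hmem⟩, ?_, ?_⟩ <;>
  · ext <;> simp [dupMap_coe, ← ha_def, ← hb_def, ← hua', ← hub']

lemma dupMap_surj (z : dup R_P I_P) :
    ∃ x : dup R I × (P.comap (dupFst R I)).primeCompl,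
      z * dupMap I P x.2 = dupMap I P x.1 := by
  obtain ⟨⟨a, s⟩, h₁⟩ := IsLocalization.surj P.primeCompl (z : R_P × R_P).1
  obtain ⟨⟨⟨i, hi⟩, t⟩, h₂⟩ :=
    (IsLocalization.mem_map_algebraMap_iff P.primeCompl R_P).mp z.2
  have hst : (s : R) * t ∉ P := fun h =>
    ((Ideal.IsPrime.mem_or_mem ‹P.IsPrime› h).elim s.2 t.2)
  have hnum : ((a * t, a * t + i * s) : R × R) ∈ dup R I := by
    rw [mem_dup]; simpa using I.mul_mem_right (s : R) hi
  have hden : ((s * t, s * t) : R × R) ∈ dup R I := by rw [mem_dup]; simp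
  refine ⟨⟨⟨_, hnum⟩, ⟨⟨_, hden⟩, hst⟩⟩, ?_⟩
  ext
  · show (z : R_P × R_P).1 * algebraMap R R_P (s * t) = algebraMap R R_P (a * t)
    rw [map_mul, map_mul, ← mul_assoc, h₁]
  · show (z : R_P × R_P).2 * algebraMap R R_P (s * t) = algebraMap R R_P (a * t + i * s)
    have hz2 : (z : R_P × R_P).2 = (z : R_P × R_P).1 + ((z : R_P × R_P).2 - (z : R_P × R_P).1) := by ring
    have e2 : ((z : R_P × R_P).2 - (z : R_P × R_P).1) * algebraMap R R_P ((s : R) * t)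
        = algebraMap R R_P (i * s) := by
      calc ((z : R_P × R_P).2 - (z : R_P × R_P).1) * algebraMap R R_P ((s : R) * t)
          = ((z : R_P × R_P).2 - (z : R_P × R_P).1) * algebraMap R R_P (t : R)
              * algebraMap R R_P (s : R) := by rw [map_mul]; ring
        _ = algebraMap R R_P i * algebraMap R R_P (s : R) := by rw [h₂]
        _ = algebraMap R R_P (i * s) := by rw [map_mul]
    have e1 : (z : R_P × R_P).1 * algebraMap R R_P ((s : R) * t) = algebraMap R R_P (a * t) := by
      rw [map_mul, ← mul_assoc, h₁, ← map_mul]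
    rw [hz2, add_mul, e1, e2, ← map_add]

lemma dupMap_exists_of_eq {x y : dup R I} (h : dupMap I P x = dupMap I P y) :
    ∃ c : (P.comap (dupFst R I)).primeCompl, ↑c * x = ↑c * y := by
  have h1 : algebraMap R R_P x.1.1 = algebraMap R R_P y.1.1 := congrArg (·.1.1) h
  have h2 : algebraMap R R_P x.1.2 = algebraMap R R_P y.1.2 := congrArg (·.1.2) h
  obtain ⟨c₁, hc₁⟩ := IsLocalization.exists_of_eq (M := P.primeCompl) h1
  obtain ⟨c₂, hc₂⟩ := IsLocalization.exists_of_eq (M := P.primeCompl) h2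
  have hc : ((c₁ * c₂ : R), (c₁ * c₂ : R)) ∈ dup R I := by rw [mem_dup]; simp
  have hcp : (c₁ : R) * c₂ ∉ P := fun h => ((Ideal.IsPrime.mem_or_mem ‹P.IsPrime› h).elim c₁.2 c₂.2)
  refine ⟨⟨⟨_, hc⟩, hcp⟩, ?_⟩
  ext
  · show (c₁ : R) * c₂ * x.1.1 = (c₁ : R) * c₂ * y.1.1
    calc (c₁ : R) * c₂ * x.1.1 = c₂ * (c₁ * x.1.1) := by ring
      _ = c₂ * (c₁ * y.1.1) := by rw [hc₁]
      _ = (c₁ : R) * c₂ * y.1.1 := by ring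
  · show (c₁ : R) * c₂ * x.1.2 = (c₁ : R) * c₂ * y.1.2
    calc (c₁ : R) * c₂ * x.1.2 = c₁ * (c₂ * x.1.2) := by ring
      _ = c₁ * (c₂ * y.1.2) := by rw [hc₂]
      _ = (c₁ : R) * c₂ * y.1.2 := by ring

end

/-- D'Anna's localization lemma, case `I ⊆ P`: the sets `P₀`, `P₁`, `P₂` coincide (and form
the prime ideal `P₀ = (dupFst)⁻¹(P)` of `R ⋈ I`), and the localization of `R ⋈ I` at `P₀`
is ring-isomorphic to `R_P ⋈ I_P`. -/
theorem dup_localization_of_le (R : Type u) [CommRing R] (I P : Ideal R) [P.IsPrime]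
    (hIP : I ≤ P) :
    let P₀ : Set (dup R I) := {x | ∃ p ∈ P, ∃ i, i ∈ I ∧ i ∈ P ∧ (x : R × R) = (p, p + i)}
    let P₁ : Set (dup R I) := {x | ∃ p ∈ P, ∃ i ∈ I, (x : R × R) = (p, p + i)}
    let P₂ : Set (dup R I) := {x | ∃ p ∈ P, ∃ i ∈ I, (x : R × R) = (p + i, p)}
    P₀ = P₁ ∧ P₁ = P₂ ∧
    ((P.comap (dupFst R I) : Ideal (dup R I)) : Set (dup R I)) = P₀ ∧
    Nonempty (Localization.AtPrime (P.comap (dupFst R I)) ≃+*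
      dup (Localization.AtPrime P) (I.map (algebraMap R (Localization.AtPrime P)))) := by
  intro P₀ P₁ P₂
  have h01 : P₀ = P₁ := by
    ext x
    constructor
    · rintro ⟨p, hp, i, hi, -, hx⟩; exact ⟨p, hp, i, hi, hx⟩
    · rintro ⟨p, hp, i, hi, hx⟩; exact ⟨p, hp, i, ⟨hi, hIP hi, hx⟩⟩
  have h12 : P₁ = P₂ := by
    ext x
    constructor
    · rintro ⟨p, hp, i, hi, hx⟩
      refine ⟨p + i, P.add_mem hp (hIP hi), -i, I.neg_mem hi, ?_⟩
      rw [hx]; exact Prod.ext (by ring) rfl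
    · rintro ⟨p, hp, i, hi, hx⟩
      refine ⟨p + i, P.add_mem hp (hIP hi), -i, I.neg_mem hi, ?_⟩
      rw [hx]; exact Prod.ext rfl (by ring)
  have hc : ((P.comap (dupFst R I) : Ideal (dup R I)) : Set (dup R I)) = P₀ := by
    ext x
    constructor
    · intro h
      have h' : (x : R × R).1 ∈ P := h
      refine ⟨(x : R × R).1, h', (x : R × R).2 - (x : R × R).1, x.2,
        hIP x.2, Prod.ext rfl (by ring)⟩
    · rintro ⟨p, hp, i, -, -, hx⟩
      show (x : R × R).1 ∈ P
      rw [hx]; exact hp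
  refine ⟨h01, h12, hc, ?_⟩
  letI : Algebra (dup R I) (dup (Localization.AtPrime P)
      (I.map (algebraMap R (Localization.AtPrime P)))) := (dupMap I P).toAlgebra
  haveI : IsLocalization (P.comap (dupFst R I)).primeCompl (dup (Localization.AtPrime P)
      (I.map (algebraMap R (Localization.AtPrime P)))) :=
    { map_units := dupMap_isUnit I P hIP
      surj := dupMap_surj I P
      exists_of_eq := fun h => dupMap_exists_of_eq I P h }
  exact ⟨(IsLocalization.algEquiv (P.comap (dupFst R I)).primeCompl
    (Localization.AtPrime (P.comap (dupFst R I))) _).toRingEquiv⟩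


end Paper
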